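/- Let γ: [a,b] → G be a C² regular curve in the affine group and t a point with ω(γ̇(t)) = γ̇₂/γ₁ − γ̇₃ ≠ 0. Then the Riemannian curvature k^L_γ of γ with respect to g_L satisfies lim_{L→∞} k^L_γ(t) = √(γ̇₁² + γ̇₂²) / (|γ₁| · |ω(γ̇(t))|). -/
import Mathlib


open Filter

/-- Lemma 2.6 (2.13) of the paper.  Let `γ` be a `C²` regular curve in the affine group,
with data at a fixed point `t`: `g1 = γ₁(t) > 0`, first derivatives `d1, d2, d3`, second
derivatives `dd1, dd3`, `w = ω(γ̇(t)) = d2/g1 - d3 ≠ 0` and `w' = (d/dt)ω(γ̇(t))`.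
With frame components `a = d1/g1`, `b = d3`, `c = w` of `γ̇` and components
`A L, B L, C` of `∇^L_{γ̇}γ̇`, the Riemannian curvature
`k^L_γ = √(‖∇^L_{γ̇}γ̇‖²/‖γ̇‖⁴ - ⟨∇^L_{γ̇}γ̇,γ̇⟩²/‖γ̇‖⁶)` (with
`‖aX1+bX2+cX3‖² = a² + b² + Lc²`) satisfies
`lim_{L→∞} k^L_γ = √(d1² + d2²)/(|g1|·|w|)`. -/
theorem affine_curvature_limit_nonhorizontal
    (g1 d1 d2 d3 dd1 dd3 w w' : ℝ)
    (hg1 : 0 < g1)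
    (hw : w = d2 / g1 - d3)
    (hreg : ¬(d1 = 0 ∧ d2 = 0 ∧ d3 = 0))
    (hw0 : w ≠ 0)
    (a b : ℝ) (ha : a = d1 / g1) (hb : b = d3)
    (A B : ℝ → ℝ) (C : ℝ)
    (hA : ∀ L : ℝ, A L = (dd1 * g1 - d1 ^ 2) / g1 ^ 2 + L * w * (d2 / g1))
    (hB : ∀ L : ℝ, B L = dd3 - L * w * (d1 / g1))
    (hC : C = w' - w * (d1 / g1)) :
    Tendsto (fun L : ℝ =>
        Real.sqrt ((A L ^ 2 + B L ^ 2 + L * C ^ 2) / (a ^ 2 + b ^ 2 + L * w ^ 2) ^ 2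
          - (A L * a + B L * b + L * C * w) ^ 2 / (a ^ 2 + b ^ 2 + L * w ^ 2) ^ 3))
      atTop (nhds (Real.sqrt (d1 ^ 2 + d2 ^ 2) / (|g1| * |w|))) := by
  have hg1' : g1 ≠ 0 := ne_of_gt hg1
  set A0 : ℝ := (dd1 * g1 - d1 ^ 2) / g1 ^ 2 with hA0
  set A1 : ℝ := w * (d2 / g1) with hA1
  set B0 : ℝ := dd3 with hB0
  set B1 : ℝ := -(w * (d1 / g1)) with hB1
  set ℓ : ℝ := (d1 ^ 2 + d2 ^ 2) / (g1 ^ 2 * w ^ 2) with hℓ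
  set g : ℝ → ℝ := fun x =>
    (A1 ^ 2 + B1 ^ 2 + x * (2 * A0 * A1 + 2 * B0 * B1 + C ^ 2) + x ^ 2 * (A0 ^ 2 + B0 ^ 2))
        / (w ^ 2 + x * (a ^ 2 + b ^ 2)) ^ 2
      - x * (A1 * a + B1 * b + C * w + x * (A0 * a + B0 * b)) ^ 2
        / (w ^ 2 + x * (a ^ 2 + b ^ 2)) ^ 3 with hg
  have hg0 : g 0 = ℓ := by
    simp only [hg, hℓ, hA1, hB1]
    field_simp
    ring
  have hcont : ContinuousAt g 0 := by
    have hne : (w ^ 2 + (0 : ℝ) * (a ^ 2 + b ^ 2)) ≠ 0 := by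
      simp [pow_ne_zero, hw0]
    apply ContinuousAt.sub
    · exact ContinuousAt.div (by fun_prop) (by fun_prop) (pow_ne_zero _ hne)
    · exact ContinuousAt.div (by fun_prop) (by fun_prop) (pow_ne_zero _ hne)
  have hcomp : Tendsto (fun L : ℝ => g L⁻¹) atTop (nhds ℓ) := by
    rw [← hg0]
    exact hcont.tendsto.comp tendsto_inv_atTop_zero
  have key : Tendsto (fun L : ℝ =>
      (A L ^ 2 + B L ^ 2 + L * C ^ 2) / (a ^ 2 + b ^ 2 + L * w ^ 2) ^ 2
        - (A L * a + B L * b + L * C * w) ^ 2 / (a ^ 2 + b ^ 2 + L * w ^ 2) ^ 3)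
      atTop (nhds ℓ) := by
    apply hcomp.congr'
    filter_upwards [eventually_gt_atTop (0 : ℝ)] with L hL
    have hL0 : L ≠ 0 := ne_of_gt hL
    have hd : a ^ 2 + b ^ 2 + L * w ^ 2 ≠ 0 := by positivity
    have hd2 : w ^ 2 + L⁻¹ * (a ^ 2 + b ^ 2) ≠ 0 := by
      have : w ^ 2 + L⁻¹ * (a ^ 2 + b ^ 2) = (a ^ 2 + b ^ 2 + L * w ^ 2) / L := by
        field_simp; ring
      rw [this]
      exact div_ne_zero hd hL0
    rw [hA L, hB L]
    simp only [hg, hA0, hA1, hB0, hB1]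
    field_simp
    ring
  have hsq : Real.sqrt ℓ = Real.sqrt (d1 ^ 2 + d2 ^ 2) / (|g1| * |w|) := by
    rw [hℓ, Real.sqrt_div' _ (by positivity)]
    · congr 1
      rw [show g1 ^ 2 * w ^ 2 = (g1 * w) ^ 2 by ring, Real.sqrt_sq_eq_abs, abs_mul]
    all_goals positivity
  rw [← hsq]
  exact (Real.continuous_sqrt.tendsto ℓ).comp key
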